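/- Let N be a positive integer, α a positive integer dividing N with 1 ≤ α ≤ N, P > 0 a real, and define Ei(−a) = −∫_a^∞ e^{−t}/t dt for a > 0. Let F(x) = Σ_{k=N−N/α+1}^{N} C(N,k) (1−e^{−x})^k e^{−(N−k)x} for x ≥ 0. Then the average throughput of the general static scheduling scheme satisfies (N/α) ∫_0^∞ log(1+Px) dF(x) = (N/α) [ Σ_{i=1}^{N} C(N,i) (−1)^i e^{i/P} Ei(−i/P) + Σ_{k=N−N/α+1}^{N−1} C(N,k) Σ_{i=0}^{k} C(k,i) (−1)^i e^{(N−k+i)/P} Ei(−(N−k+i)/P) ]. -/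

import Mathlib

open Real Set Finset

/-- `EiNeg a = Ei(−a) = −∫_a^∞ e^{−t}/t dt` for `a > 0`. -/
noncomputable def EiNeg (a : ℝ) : ℝ := -∫ t in Set.Ioi a, Real.exp (-t) / t

open MeasureTheory Filter Asymptotics Topology

private lemma tendsto_log_mul_exp {P d : ℝ} (hP : 0 < P) (hd : 0 < d) :
    Tendsto (fun x : ℝ => Real.log (1 + P * x) * Real.exp (-(d * x))) atTop (𝓝 0) := by
  have h1 : Tendsto (fun x : ℝ => (P / d) * ((d * x) ^ 1 * Real.exp (-(d * x)))) atTop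
      (𝓝 ((P / d) * 0)) := by
    apply Tendsto.const_mul
    have h := (tendsto_pow_mul_exp_neg_atTop_nhds_zero 1).comp
      (tendsto_id.const_mul_atTop hd)
    simpa [Function.comp_def] using h
  rw [mul_zero] at h1
  refine squeeze_zero' ?_ ?_ h1
  · filter_upwards [eventually_ge_atTop (0:ℝ)] with x hx
    have h2 : (1:ℝ) ≤ 1 + P * x := by nlinarith
    exact mul_nonneg (Real.log_nonneg h2) (Real.exp_pos _).le
  · filter_upwards [eventually_ge_atTop (0:ℝ)] with x hx
    have h2 : (0:ℝ) < 1 + P * x := by nlinarith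
    have h3 : Real.log (1 + P * x) ≤ P * x := by
      have := Real.log_le_sub_one_of_pos h2
      linarith
    have h4 : (P / d) * ((d * x) ^ 1 * Real.exp (-(d * x)))
        = (P * x) * Real.exp (-(d * x)) := by
      field_simp
    rw [h4]
    exact mul_le_mul_of_nonneg_right h3 (Real.exp_pos _).le

private lemma contOn_log_mul_exp {P c : ℝ} (hP : 0 < P) :
    ContinuousOn (fun x : ℝ => Real.log (1 + P * x) * Real.exp (-(c * x))) (Ici 0) := by
  apply ContinuousOn.mul
  · apply ContinuousOn.log
    · fun_prop
    · intro x hx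
      have hx0 : (0:ℝ) ≤ x := hx
      nlinarith
  · fun_prop

private lemma integrableOn_log_mul_exp {P c : ℝ} (hP : 0 < P) (hc : 0 < c) :
    IntegrableOn (fun x : ℝ => Real.log (1 + P * x) * Real.exp (-(c * x))) (Ioi 0) := by
  apply integrable_of_isBigO_exp_neg (half_pos hc) (contOn_log_mul_exp hP)
  apply IsLittleO.isBigO
  apply isLittleO_of_tendsto (fun x hx => absurd hx (Real.exp_ne_zero _))
  have h := tendsto_log_mul_exp hP (half_pos hc)
  refine Tendsto.congr (fun x => ?_) h
  rw [mul_div_assoc, ← Real.exp_sub]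
  congr 1
  ring

private lemma integrableOn_ratio {P c : ℝ} (hP : 0 < P) (hc : 0 < c) :
    IntegrableOn (fun x : ℝ => P / (1 + P * x) * Real.exp (-(c * x))) (Ioi 0) := by
  apply integrable_of_isBigO_exp_neg hc
  · apply ContinuousOn.mul
    · apply ContinuousOn.div continuousOn_const (by fun_prop)
      intro x hx
      have hx0 : (0:ℝ) ≤ x := hx
      nlinarith
    · fun_prop
  · apply IsBigO.of_bound P
    filter_upwards [eventually_ge_atTop (0:ℝ)] with x hx
    have h2 : (1:ℝ) ≤ 1 + P * x := by nlinarith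
    have h3 : |P / (1 + P * x)| ≤ P := by
      rw [abs_of_nonneg (by positivity)]
      rw [div_le_iff₀ (by linarith)]
      nlinarith
    simp only [norm_mul, Real.norm_eq_abs, Real.abs_exp, neg_mul]
    exact mul_le_mul_of_nonneg_right h3 (Real.exp_pos _).le

private lemma ibp {P c : ℝ} (hP : 0 < P) (hc : 0 < c) :
    c * ∫ x in Ioi (0:ℝ), Real.log (1 + P * x) * Real.exp (-(c * x))
      = ∫ x in Ioi (0:ℝ), P / (1 + P * x) * Real.exp (-(c * x)) := by
  set f : ℝ → ℝ := fun x => -(Real.log (1 + P * x) * Real.exp (-(c * x))) with hf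
  set f' : ℝ → ℝ := fun x =>
    c * (Real.log (1 + P * x) * Real.exp (-(c * x)))
      - P / (1 + P * x) * Real.exp (-(c * x)) with hf'
  have hderiv : ∀ x ∈ Ioi (0:ℝ), HasDerivAt f (f' x) x := by
    intro x hx
    have hx0 : (0:ℝ) < x := hx
    have hpos : (0:ℝ) < 1 + P * x := by nlinarith
    have h1 : HasDerivAt (fun x : ℝ => 1 + P * x) P x := by
      simpa using ((hasDerivAt_id x).const_mul P).const_add 1
    have h2 : HasDerivAt (fun x : ℝ => Real.log (1 + P * x)) (P / (1 + P * x)) x :=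
      h1.log hpos.ne'
    have h3 : HasDerivAt (fun x : ℝ => Real.exp (-(c * x)))
        (Real.exp (-(c * x)) * (-c)) x := by
      have h4 : HasDerivAt (fun x : ℝ => -(c * x)) (-c) x := by
        simpa using ((hasDerivAt_id x).const_mul c).fun_neg
      exact h4.exp
    have h5 := (h2.fun_mul h3).fun_neg
    refine h5.congr_deriv ?_
    show _ = c * (Real.log (1 + P * x) * Real.exp (-(c * x)))
      - P / (1 + P * x) * Real.exp (-(c * x))
    ring
  have hint : IntegrableOn f' (Ioi (0:ℝ)) :=
    ((integrableOn_log_mul_exp hP hc).const_mul c).sub (integrableOn_ratio hP hc)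
  have htend : Tendsto f atTop (𝓝 0) := by
    simpa using (tendsto_log_mul_exp hP hc).neg
  have hcont : ContinuousWithinAt f (Ici (0:ℝ)) 0 :=
    ((contOn_log_mul_exp (c := c) hP).neg) 0 (by simp)
  have h0 := integral_Ioi_of_hasDerivAt_of_tendsto hcont hderiv hint htend
  have hf0 : f 0 = 0 := by simp [hf]
  rw [hf0, sub_zero] at h0
  have hsplit : ∫ x in Ioi (0:ℝ), f' x
      = c * (∫ x in Ioi (0:ℝ), Real.log (1 + P * x) * Real.exp (-(c * x)))
        - ∫ x in Ioi (0:ℝ), P / (1 + P * x) * Real.exp (-(c * x)) := by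
    simp only [hf']
    rw [integral_sub ((integrableOn_log_mul_exp hP hc).const_mul c)
      (integrableOn_ratio hP hc), integral_const_mul]
  rw [h0] at hsplit
  linarith

private lemma subst {P c : ℝ} (hP : 0 < P) (hc : 0 < c) :
    ∫ x in Ioi (0:ℝ), P / (1 + P * x) * Real.exp (-(c * x))
      = Real.exp (c / P) * ∫ t in Ioi (c / P), Real.exp (-t) / t := by
  set g : ℝ → ℝ := fun t => Real.exp (-t) / t with hg
  have h1 : ∫ x in Ioi (0:ℝ), P / (1 + P * x) * Real.exp (-(c * x))
      = ∫ x in Ioi (0:ℝ), (Real.exp (c / P) * c) * g (c * x + c / P) := by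
    refine setIntegral_congr_fun measurableSet_Ioi (fun x hx => ?_)
    have hx0 : (0:ℝ) < x := hx
    have hpos : (0:ℝ) < 1 + P * x := by nlinarith
    have hcP : (0:ℝ) < c / P := div_pos hc hP
    have harg : c * x + c / P = (c / P) * (1 + P * x) := by
      field_simp
      ring
    simp only [hg]
    rw [harg, show -(c / P * (1 + P * x)) = -(c * x) + -(c / P) by field_simp; ring, Real.exp_add]
    have hE : Real.exp (c / P) * Real.exp (-(c / P)) = 1 := by
      rw [← Real.exp_add]; simp
    rw [show Real.exp (c / P) * c *
        (Real.exp (-(c * x)) * Real.exp (-(c / P)) / (c / P * (1 + P * x)))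
        = (Real.exp (c / P) * Real.exp (-(c / P)))
            * (c * Real.exp (-(c * x)) / (c / P * (1 + P * x))) by ring]
    rw [hE, one_mul]
    field_simp
  rw [h1, integral_const_mul]
  have h2 : ∫ x in Ioi (0:ℝ), g (c * x + c / P)
      = c⁻¹ * ∫ u in Ioi (0:ℝ), g (u + c / P) := by
    have := integral_comp_mul_left_Ioi (fun u => g (u + c / P)) 0 hc
    simp only [mul_zero, smul_eq_mul] at this
    exact this
  have h3 : ∫ u in Ioi (0:ℝ), g (u + c / P) = ∫ t in Ioi (c / P), g t := by
    have hmp := (measurePreserving_add_right (volume : Measure ℝ) (c / P))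
    have hemb : MeasurableEmbedding (fun x : ℝ => x + c / P) :=
      measurableEmbedding_addRight (c / P)
    have := hmp.setIntegral_preimage_emb hemb g (Ioi (c / P))
    rwa [show (fun x : ℝ => x + c / P) ⁻¹' Set.Ioi (c / P) = Set.Ioi 0 by
      ext z; simp] at this
  rw [h2, h3]
  field_simp

private lemma key {P c : ℝ} (hP : 0 < P) (hc : 0 < c) :
    ∫ x in Ioi (0:ℝ), Real.log (1 + P * x) * (Real.exp (-(c * x)) * (-c))
      = Real.exp (c / P) * EiNeg (c / P) := by
  have h1 : ∫ x in Ioi (0:ℝ), Real.log (1 + P * x) * (Real.exp (-(c * x)) * (-c))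
      = (-c) * ∫ x in Ioi (0:ℝ), Real.log (1 + P * x) * Real.exp (-(c * x)) := by
    rw [← integral_const_mul]
    congr 1
    funext x
    ring
  rw [h1, neg_mul, ibp hP hc, subst hP hc, EiNeg]
  ring

private lemma integrable_term {P : ℝ} (hP : 0 < P) (A : ℝ) {b : ℝ} (hb : 0 ≤ b) :
    IntegrableOn
      (fun x : ℝ => Real.log (1 + P * x) * (A * (Real.exp (-(b * x)) * (-b))))
      (Ioi 0) := by
  rcases hb.eq_or_lt with hb0 | hb0
  · simp [← hb0]
  · have h := (integrableOn_log_mul_exp hP hb0).const_mul (A * (-b))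
    refine MeasureTheory.IntegrableOn.congr_fun h (fun x _ => ?_) measurableSet_Ioi
    ring

private lemma term_integral {P : ℝ} (hP : 0 < P) (A : ℝ) {b : ℝ} (hb : 0 < b) :
    ∫ x in Ioi (0:ℝ), Real.log (1 + P * x) * (A * (Real.exp (-(b * x)) * (-b)))
      = A * (Real.exp (b / P) * EiNeg (b / P)) := by
  rw [← key hP hb, ← integral_const_mul]
  congr 1
  funext x
  ring

private lemma expand_pow (k : ℕ) (a y : ℝ) :
    (1 - Real.exp (-y)) ^ k * Real.exp (-(a * y))
      = ∑ i ∈ Finset.range (k+1),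
          (k.choose i : ℝ) * (-1) ^ i * Real.exp (-((a + i) * y)) := by
  have h : (1 - Real.exp (-y)) ^ k = ∑ i ∈ Finset.range (k+1),
      (-Real.exp (-y)) ^ i * 1 ^ (k - i) * (k.choose i : ℝ) := by
    rw [sub_eq_add_neg, add_comm]
    exact add_pow _ _ _
  rw [h, Finset.sum_mul]
  refine Finset.sum_congr rfl fun i _ => ?_
  have h2 : (-Real.exp (-y)) ^ i = (-1 : ℝ) ^ i * Real.exp (-((i:ℝ) * y)) := by
    rw [neg_pow]
    congr 1
    rw [← Real.exp_nat_mul]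
    congr 1
    ring
  rw [h2, one_pow]
  have h3 : Real.exp (-((i:ℝ) * y)) * Real.exp (-(a * y))
      = Real.exp (-((a + i) * y)) := by
    rw [← Real.exp_add]
    congr 1
    ring
  calc (-1:ℝ) ^ i * Real.exp (-((i:ℝ) * y)) * 1 * (k.choose i : ℝ) * Real.exp (-(a * y))
      = (k.choose i : ℝ) * (-1) ^ i
          * (Real.exp (-((i:ℝ) * y)) * Real.exp (-(a * y))) := by ring
    _ = (k.choose i : ℝ) * (-1) ^ i * Real.exp (-((a + i) * y)) := by rw [h3]

theorem general_static_scheduler_throughput (N α : ℕ) (hα1 : 1 ≤ α) (hαN : α ≤ N)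
    (hdvd : α ∣ N) (P : ℝ) (hP : 0 < P) :
    ((N : ℝ) / α) * (∫ x in Ioi (0 : ℝ), Real.log (1 + P * x) *
        deriv (fun y : ℝ => ∑ k ∈ Finset.Icc (N - N / α + 1) N,
          (N.choose k : ℝ) * (1 - Real.exp (-y)) ^ k *
            Real.exp (-(((N : ℝ) - k) * y))) x) =
      ((N : ℝ) / α) *
        ((∑ i ∈ Finset.Icc 1 N, (N.choose i : ℝ) * (-1 : ℝ) ^ i *
            Real.exp ((i : ℝ) / P) * EiNeg ((i : ℝ) / P)) +
          ∑ k ∈ Finset.Icc (N - N / α + 1) (N - 1), (N.choose k : ℝ) *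
            ∑ i ∈ Finset.range (k + 1), (k.choose i : ℝ) * (-1 : ℝ) ^ i *
              Real.exp (((N : ℝ) - k + i) / P) * EiNeg (((N : ℝ) - k + i) / P)) := by
  have hNpos : 0 < N := lt_of_lt_of_le hα1 hαN
  set m := N - N / α + 1 with hm
  have hMα : 1 ≤ N / α := (Nat.one_le_div_iff hα1).mpr hαN
  have hmN : m ≤ N := by omega
  congr 1
  -- notation
  set b : ℕ → ℕ → ℝ := fun k i => (N : ℝ) - k + i with hb
  have hbnonneg : ∀ k ∈ Finset.Icc m N, ∀ i : ℕ, 0 ≤ b k i := by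
    intro k hk i
    rw [Finset.mem_Icc] at hk
    have : (k : ℝ) ≤ N := Nat.cast_le.mpr hk.2
    simp only [hb]
    have : (0:ℝ) ≤ (N : ℝ) - k := by linarith
    positivity
  -- Step A: rewrite the function as a double sum of exponentials
  have hfun : (fun y : ℝ => ∑ k ∈ Finset.Icc m N,
        (N.choose k : ℝ) * (1 - Real.exp (-y)) ^ k * Real.exp (-(((N : ℝ) - k) * y)))
      = fun y => ∑ k ∈ Finset.Icc m N, ∑ i ∈ Finset.range (k+1),
          ((N.choose k : ℝ) * ((k.choose i : ℝ) * (-1) ^ i))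
            * Real.exp (-((b k i) * y)) := by
    funext y
    refine Finset.sum_congr rfl fun k hk => ?_
    rw [mul_assoc, expand_pow k ((N : ℝ) - k) y, Finset.mul_sum]
    refine Finset.sum_congr rfl fun i _ => ?_
    simp only [hb]
    ring
  -- Step B: derivative
  have hderiv : ∀ x : ℝ, deriv (fun y : ℝ => ∑ k ∈ Finset.Icc m N,
        (N.choose k : ℝ) * (1 - Real.exp (-y)) ^ k * Real.exp (-(((N : ℝ) - k) * y))) x
      = ∑ k ∈ Finset.Icc m N, ∑ i ∈ Finset.range (k+1),
          ((N.choose k : ℝ) * ((k.choose i : ℝ) * (-1) ^ i))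
            * (Real.exp (-((b k i) * x)) * (-(b k i))) := by
    intro x
    rw [hfun]
    have hD : HasDerivAt (fun y : ℝ => ∑ k ∈ Finset.Icc m N, ∑ i ∈ Finset.range (k+1),
        ((N.choose k : ℝ) * ((k.choose i : ℝ) * (-1) ^ i)) * Real.exp (-((b k i) * y)))
        (∑ k ∈ Finset.Icc m N, ∑ i ∈ Finset.range (k+1),
          ((N.choose k : ℝ) * ((k.choose i : ℝ) * (-1) ^ i))
            * (Real.exp (-((b k i) * x)) * (-(b k i)))) x := by
      apply HasDerivAt.fun_sum
      intro k _
      apply HasDerivAt.fun_sum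
      intro i _
      have h4 : HasDerivAt (fun y : ℝ => -((b k i) * y)) (-(b k i)) x := by
        simpa using ((hasDerivAt_id x).const_mul (b k i)).fun_neg
      exact h4.exp.const_mul _
    exact hD.deriv
  simp only [hderiv]
  -- Step C: pull sums out of the integral
  have hint : ∀ k ∈ Finset.Icc m N, ∀ i ∈ Finset.range (k+1),
      IntegrableOn (fun x : ℝ => Real.log (1 + P * x) *
        (((N.choose k : ℝ) * ((k.choose i : ℝ) * (-1) ^ i))
          * (Real.exp (-((b k i) * x)) * (-(b k i))))) (Ioi 0) := by
    intro k hk i _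
    exact integrable_term hP _ (hbnonneg k hk i)
  have hswap : ∫ x in Ioi (0:ℝ), Real.log (1 + P * x) *
        (∑ k ∈ Finset.Icc m N, ∑ i ∈ Finset.range (k+1),
          ((N.choose k : ℝ) * ((k.choose i : ℝ) * (-1) ^ i))
            * (Real.exp (-((b k i) * x)) * (-(b k i))))
      = ∑ k ∈ Finset.Icc m N, ∑ i ∈ Finset.range (k+1),
          ∫ x in Ioi (0:ℝ), Real.log (1 + P * x) *
            (((N.choose k : ℝ) * ((k.choose i : ℝ) * (-1) ^ i))
              * (Real.exp (-((b k i) * x)) * (-(b k i)))) := by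
    rw [show (fun x : ℝ => Real.log (1 + P * x) *
        (∑ k ∈ Finset.Icc m N, ∑ i ∈ Finset.range (k+1),
          ((N.choose k : ℝ) * ((k.choose i : ℝ) * (-1) ^ i))
            * (Real.exp (-((b k i) * x)) * (-(b k i)))))
      = (fun x : ℝ => ∑ k ∈ Finset.Icc m N, ∑ i ∈ Finset.range (k+1),
          Real.log (1 + P * x) * (((N.choose k : ℝ) * ((k.choose i : ℝ) * (-1) ^ i))
            * (Real.exp (-((b k i) * x)) * (-(b k i))))) by
        funext x; rw [Finset.mul_sum]; exact Finset.sum_congr rfl fun k _ => Finset.mul_sum ..]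
    rw [integral_finset_sum _ (fun k hk => integrable_finset_sum _ (hint k hk))]
    exact Finset.sum_congr rfl fun k hk =>
      integral_finset_sum _ (hint k hk)
  rw [hswap]
  -- Step D: split off k = N
  have hsplitset : Finset.Icc m N = insert N (Finset.Icc m (N-1)) := by
    ext j
    simp only [Finset.mem_Icc, Finset.mem_insert]
    omega
  rw [hsplitset, Finset.sum_insert (by simp only [Finset.mem_Icc]; omega)]
  congr 1
  -- k = N part
  · have hrange : Finset.range (N+1) = insert 0 (Finset.Icc 1 N) := by
      ext j
      simp only [Finset.mem_range, Finset.mem_insert, Finset.mem_Icc]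
      omega
    rw [hrange, Finset.sum_insert (by simp)]
    have hzero : ∫ x in Ioi (0:ℝ), Real.log (1 + P * x) *
        (((N.choose N : ℝ) * ((N.choose 0 : ℝ) * (-1) ^ 0))
          * (Real.exp (-((b N 0) * x)) * (-(b N 0)))) = 0 := by
      have hb0 : b N 0 = 0 := by simp [hb]
      simp [hb0]
    rw [hzero, zero_add]
    refine Finset.sum_congr rfl fun i hi => ?_
    rw [Finset.mem_Icc] at hi
    have hbi : b N i = (i : ℝ) := by simp [hb]
    have hipos : (0:ℝ) < b N i := by
      rw [hbi]
      exact_mod_cast hi.1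
    rw [term_integral hP _ hipos, hbi]
    simp [Nat.choose_self]
    ring
  -- k ≤ N - 1 part
  · refine Finset.sum_congr rfl fun k hk => ?_
    rw [Finset.mem_Icc] at hk
    rw [Finset.mul_sum]
    refine Finset.sum_congr rfl fun i _ => ?_
    have hkN : (k : ℝ) + 1 ≤ N := by
      have : k + 1 ≤ N := by omega
      exact_mod_cast this
    have hbpos : (0:ℝ) < b k i := by
      simp only [hb]
      have : (0:ℝ) ≤ (i:ℝ) := by positivity
      linarith
    rw [term_integral hP _ hbpos]
    simp only [hb]
    ring
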